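/- Let (Ω, F, P) be a probability space with a filtration (F_i)_{i ≥ 0}, b ∈ (1, 2], c > 0, C ≥ 0, and let (D_i)_{i ≥ 1} be random variables such that each D_i is F_i-measurable and integrable with E[|D_i|^b] < ∞, E[D_i | F_{i−1}] = 0 almost surely, and E[|D_i|^b | F_{i−1}] ≤ C almost surely for every i. For n ≥ 1 set τ_n = c n^{1/b}. Then ( E[ ( (1/n) Σ_{i=1}^n ψ_{τ_n}(D_i) )² ] )^{1/2} ≤ ( √C · c^{(2−b)/2} + C · c^{1−b} ) · n^{(1−b)/b}. -/

import Mathlib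

open MeasureTheory Real

/-- The truncation function `ψ_τ(x) = max(−τ, min(x, τ))`. -/
noncomputable def truncFun (τ : ℝ) (x : ℝ) : ℝ := max (-τ) (min x τ)

lemma truncFun_abs_le {τ x : ℝ} (hτ : 0 ≤ τ) : |truncFun τ x| ≤ τ := by
  unfold truncFun
  rw [abs_le]
  constructor
  · exact le_max_left _ _
  · exact max_le (by linarith) (min_le_right _ _)

lemma truncFun_abs_le_abs {τ x : ℝ} (hτ : 0 ≤ τ) : |truncFun τ x| ≤ |x| := by
  unfold truncFun
  rcases le_total 0 x with hx | hx
  · have h1 : max (-τ) (min x τ) = min x τ := max_eq_right (le_trans (by linarith) (le_min hx hτ))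
    rw [h1, abs_of_nonneg (le_min hx hτ), abs_of_nonneg hx]
    exact min_le_left _ _
  · have h1 : min x τ = x := min_eq_left (by linarith)
    rw [h1, abs_of_nonpos (max_le (by linarith) hx), abs_of_nonpos hx]
    exact neg_le_neg (le_max_right _ _)

lemma truncFun_eq_self {τ x : ℝ} (h : |x| ≤ τ) : truncFun τ x = x := by
  rw [abs_le] at h
  unfold truncFun
  rw [min_eq_left h.2, max_eq_right h.1]

lemma abs_truncFun_sub_le {b τ x : ℝ} (hb : 1 ≤ b) (hτ : 0 < τ) :
    |truncFun τ x - x| ≤ |x| ^ b * τ ^ (1 - b) := by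
  rcases le_or_gt |x| τ with h | h
  · rw [truncFun_eq_self h, sub_self, abs_zero]
    positivity
  · have hx0 : 0 < |x| := lt_trans hτ h
    have h1 : |truncFun τ x - x| ≤ |x| := by
      rcases le_total 0 x with hx | hx
      · have hxτ : τ < x := by rwa [abs_of_nonneg hx] at h
        have : truncFun τ x = τ := by
          unfold truncFun; rw [min_eq_right hxτ.le, max_eq_right (by linarith)]
        rw [this, abs_of_nonpos (by linarith), abs_of_nonneg hx]; linarith
      · have hxτ : x < -τ := by rw [abs_of_nonpos hx] at h; linarith
        have : truncFun τ x = -τ := by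
          unfold truncFun; rw [min_eq_left (by linarith), max_eq_left (by linarith)]
        rw [this, abs_of_nonneg (by linarith), abs_of_nonpos hx]; linarith
    refine h1.trans ?_
    have h2 : |x| ^ (1 - b : ℝ) ≤ τ ^ (1 - b : ℝ) :=
      Real.rpow_le_rpow_of_nonpos hτ h.le (by linarith)
    calc |x| = |x| ^ b * |x| ^ (1 - b : ℝ) := by
          rw [← Real.rpow_add hx0]; norm_num
      _ ≤ |x| ^ b * τ ^ (1 - b : ℝ) :=
          mul_le_mul_of_nonneg_left h2 (Real.rpow_nonneg (abs_nonneg x) b)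

lemma sq_truncFun_le {b τ x : ℝ} (hb1 : 1 ≤ b) (hb2 : b ≤ 2) (hτ : 0 < τ) :
    (truncFun τ x) ^ 2 ≤ |x| ^ b * τ ^ (2 - b) := by
  set t := |truncFun τ x| with ht
  have ht0 : 0 ≤ t := abs_nonneg _
  have h1 : (truncFun τ x) ^ 2 = t ^ (2 : ℝ) := by
    rw [← sq_abs, ← ht, ← Real.rpow_natCast t 2]; norm_num
  rw [h1]
  rcases eq_or_lt_of_le ht0 with htz | htp
  · rw [← htz, Real.zero_rpow (by norm_num)]; positivity
  · have h2 : t ^ (2 : ℝ) = t ^ b * t ^ (2 - b : ℝ) := by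
      rw [← Real.rpow_add htp]; norm_num
    rw [h2]
    exact mul_le_mul (Real.rpow_le_rpow ht0 (truncFun_abs_le_abs hτ.le) (by linarith))
      (Real.rpow_le_rpow ht0 (truncFun_abs_le hτ.le) (by linarith))
      (Real.rpow_nonneg ht0 _) (Real.rpow_nonneg (abs_nonneg x) _)

lemma exp_arith_aux {b : ℝ} (hb : b ≠ 0) :
    (-1 : ℝ) + (1 / 2 + (2 - b) / (2 * b)) = (1 - b) / b := by
  field_simp
  ring

/-- L² rate for averages of adaptively truncated heavy-tailed martingale differences:
`D i` stands for `D_{i+1}` (F_{i+1}-measurable) and `ℱ i` for `F_i`, and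
`τ_n = c n^{1/b}`. -/
theorem truncated_average_L2_rate
    {Ω : Type*} {mΩ : MeasurableSpace Ω} (μ : Measure Ω) [IsProbabilityMeasure μ]
    (ℱ : Filtration ℕ mΩ)
    (b c C : ℝ) (hb : b ∈ Set.Ioc (1 : ℝ) 2) (hc : 0 < c) (hC : 0 ≤ C)
    (D : ℕ → Ω → ℝ)
    (hmeas : ∀ i, Measurable[ℱ (i + 1)] (D i))
    (hint : ∀ i, Integrable (D i) μ)
    (hintb : ∀ i, Integrable (fun ω => |D i ω| ^ b) μ)
    (hzero : ∀ i, μ[D i | ℱ i] =ᵐ[μ] 0)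
    (hcond : ∀ i, ∀ᵐ ω ∂μ, (μ[fun ω' => |D i ω'| ^ b | ℱ i]) ω ≤ C) :
    ∀ n : ℕ, 1 ≤ n →
      (∫ ω, ((1 / (n : ℝ)) * ∑ i ∈ Finset.range n,
          truncFun (c * (n : ℝ) ^ (1 / b)) (D i ω)) ^ 2 ∂μ) ^ (1 / (2 : ℝ))
        ≤ (Real.sqrt C * c ^ ((2 - b) / 2) + C * c ^ (1 - b)) * (n : ℝ) ^ ((1 - b) / b) := by
  obtain ⟨hb1, hb2⟩ := hb
  intro n hn
  have hn0 : (0 : ℝ) < n := by exact_mod_cast Nat.lt_of_lt_of_le Nat.zero_lt_one hn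
  set τ : ℝ := c * (n : ℝ) ^ (1 / b) with hτdef
  have hτ : 0 < τ := mul_pos hc (Real.rpow_pos_of_pos hn0 _)
  set X : ℕ → Ω → ℝ := fun i ω => truncFun τ (D i ω) with hXdef
  set g : ℕ → Ω → ℝ := fun i => μ[X i | ℱ i] with hgdef
  set M : ℕ → Ω → ℝ := fun i => X i - g i with hMdef
  set K : ℝ := C * τ ^ (1 - b) with hKdefK
  have hK0 : 0 ≤ K := mul_nonneg hC (Real.rpow_nonneg hτ.le _)
  -- measurability and integrability of X
  have hXsm : ∀ i, StronglyMeasurable[ℱ (i + 1)] (X i) := by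
    intro i
    have : Measurable[ℱ (i + 1)] (X i) := by
      simp only [hXdef]; unfold truncFun
      exact measurable_const.max ((hmeas i).min measurable_const)
    exact this.stronglyMeasurable
  have hXm : ∀ i, AEStronglyMeasurable (X i) μ := fun i =>
    ((hXsm i).mono (ℱ.le (i + 1))).aestronglyMeasurable
  have hXb : ∀ i ω, |X i ω| ≤ τ := fun i ω => truncFun_abs_le hτ.le
  -- generic integrability from a.e. bounds
  have hbd : ∀ (f : Ω → ℝ) (Kf : ℝ), AEStronglyMeasurable f μ →
      (∀ᵐ ω ∂μ, |f ω| ≤ Kf) → Integrable f μ := by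
    intro f Kf hm hbf
    exact (integrable_const Kf).mono' hm (hbf.mono fun ω h => by rwa [Real.norm_eq_abs])
  have hXint : ∀ i, Integrable (X i) μ := fun i =>
    hbd _ τ (hXm i) (Filter.Eventually.of_forall (hXb i))
  -- conditional expectation g
  have hgsm : ∀ i, StronglyMeasurable[ℱ i] (g i) := fun i => stronglyMeasurable_condExp
  have hgm : ∀ i, AEStronglyMeasurable (g i) μ := fun i =>
    ((hgsm i).mono (ℱ.le i)).aestronglyMeasurable
  have hgint : ∀ i, Integrable (g i) μ := fun i => integrable_condExp
  -- bias bound : |g i| ≤ K a.e.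
  have hgb : ∀ i, ∀ᵐ ω ∂μ, |g i ω| ≤ K := by
    intro i
    have hXD_int : Integrable (X i - D i) μ := (hXint i).sub (hint i)
    have habs_int : Integrable (fun ω => |X i ω - D i ω|) μ := hXD_int.abs
    have hbound_int : Integrable (fun ω => τ ^ (1 - b) * |D i ω| ^ b) μ :=
      (hintb i).const_mul _
    have hsub : g i =ᵐ[μ] μ[X i - D i | ℱ i] := by
      have h1 : μ[X i - D i | ℱ i] =ᵐ[μ] μ[X i | ℱ i] - μ[D i | ℱ i] :=
        condExp_sub (hXint i) (hint i) _
      filter_upwards [h1, hzero i] with ω h1ω h2ω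
      simp only [Pi.sub_apply] at h1ω
      simp only [hgdef, h1ω, h2ω, Pi.zero_apply, sub_zero]
    have hptws : ∀ᵐ ω ∂μ, |X i ω - D i ω| ≤ τ ^ (1 - b) * |D i ω| ^ b := by
      refine Filter.Eventually.of_forall fun ω => ?_
      rw [mul_comm]
      exact abs_truncFun_sub_le hb1.le hτ
    have hup : μ[X i - D i | ℱ i] ≤ᵐ[μ] μ[fun ω => τ ^ (1 - b) * |D i ω| ^ b | ℱ i] :=
      condExp_mono hXD_int hbound_int
        (Filter.Eventually.of_forall fun ω => (le_abs_self _).trans (by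
          have := hptws; exact (abs_truncFun_sub_le hb1.le hτ).trans_eq (mul_comm _ _)))
    have hdown : μ[fun ω => -(X i ω - D i ω) | ℱ i] ≤ᵐ[μ]
        μ[fun ω => τ ^ (1 - b) * |D i ω| ^ b | ℱ i] :=
      condExp_mono hXD_int.neg hbound_int
        (Filter.Eventually.of_forall fun ω => (neg_le_abs _).trans
          ((abs_truncFun_sub_le hb1.le hτ).trans_eq (mul_comm _ _)))
    have hneg : μ[fun ω => -(X i ω - D i ω) | ℱ i] =ᵐ[μ] -μ[X i - D i | ℱ i] := by
      have := condExp_neg (μ := μ) (m := ℱ i) (X i - D i)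
      exact this
    have hsmul : μ[fun ω => τ ^ (1 - b) * |D i ω| ^ b | ℱ i] =ᵐ[μ]
        fun ω => τ ^ (1 - b) * (μ[fun ω' => |D i ω'| ^ b | ℱ i]) ω := by
      have := condExp_smul (μ := μ) (m := ℱ i) (τ ^ (1 - b) : ℝ) (fun ω => |D i ω| ^ b)
      filter_upwards [this] with ω hω
      simpa [Pi.smul_def, smul_eq_mul] using hω
    filter_upwards [hsub, hup, hdown, hneg, hsmul, hcond i] with ω h1 h2 h3 h4 h5 h6
    rw [h1, abs_le]
    constructor
    · have := h3.trans_eq h5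
      rw [h4, Pi.neg_apply] at this
      have hb' : τ ^ (1 - b) * (μ[fun ω' => |D i ω'| ^ b | ℱ i]) ω ≤ τ ^ (1 - b) * C :=
        mul_le_mul_of_nonneg_left h6 (Real.rpow_nonneg hτ.le _)
      simp only [hKdefK]
      nlinarith [this, hb']
    · have := h2.trans_eq h5
      have hb' : τ ^ (1 - b) * (μ[fun ω' => |D i ω'| ^ b | ℱ i]) ω ≤ τ ^ (1 - b) * C :=
        mul_le_mul_of_nonneg_left h6 (Real.rpow_nonneg hτ.le _)
      simp only [hKdefK]
      nlinarith [this, hb']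
  -- M facts
  have hMsm : ∀ i, StronglyMeasurable[ℱ (i + 1)] (M i) := fun i =>
    (hXsm i).sub ((hgsm i).mono (ℱ.mono (Nat.le_succ i)))
  have hMm : ∀ i, AEStronglyMeasurable (M i) μ := fun i =>
    ((hMsm i).mono (ℱ.le (i + 1))).aestronglyMeasurable
  have hMint : ∀ i, Integrable (M i) μ := fun i => (hXint i).sub (hgint i)
  have hMb : ∀ i, ∀ᵐ ω ∂μ, |M i ω| ≤ τ + K := by
    intro i
    filter_upwards [hgb i] with ω h1
    simp only [hMdef, Pi.sub_apply]
    calc |X i ω - g i ω| ≤ |X i ω| + |g i ω| := abs_sub _ _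
      _ ≤ τ + K := add_le_add (hXb i ω) h1
  have hMcond : ∀ i, μ[M i | ℱ i] =ᵐ[μ] 0 := by
    intro i
    have h1 : μ[X i - g i | ℱ i] =ᵐ[μ] μ[X i | ℱ i] - μ[g i | ℱ i] :=
      condExp_sub (hXint i) (hgint i) _
    have h2 : μ[g i | ℱ i] = g i :=
      condExp_of_stronglyMeasurable (ℱ.le i) (hgsm i) (hgint i)
    calc μ[M i | ℱ i] =ᵐ[μ] μ[X i | ℱ i] - μ[g i | ℱ i] := h1
      _ = g i - g i := by rw [h2, hgdef]
      _ = 0 := sub_self _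
  -- products of M's are integrable
  have hprod : ∀ i j, Integrable (fun ω => M i ω * M j ω) μ := by
    intro i j
    refine hbd _ ((τ + K) * (τ + K)) ((hMm i).mul (hMm j)) ?_
    filter_upwards [hMb i, hMb j] with ω h1 h2
    rw [abs_mul]
    exact mul_le_mul h1 h2 (abs_nonneg _) (by positivity)
  -- orthogonality
  have horth : ∀ i j, i < j → ∫ ω, M i ω * M j ω ∂μ = 0 := by
    intro i j hij
    have hsm : StronglyMeasurable[ℱ j] (M i) := (hMsm i).mono (ℱ.mono hij)
    have h1 : μ[M i * M j | ℱ j] =ᵐ[μ] M i * μ[M j | ℱ j] :=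
      condExp_mul_of_stronglyMeasurable_left hsm (hprod i j) (hMint j)
    have h2 : μ[M i * M j | ℱ j] =ᵐ[μ] 0 := by
      filter_upwards [h1, hMcond j] with ω hω h0
      simp only [hω, Pi.mul_apply, h0, Pi.zero_apply, mul_zero]
    calc ∫ ω, M i ω * M j ω ∂μ = ∫ ω, (μ[M i * M j | ℱ j]) ω ∂μ :=
          (integral_condExp (ℱ.le j)).symm
      _ = ∫ ω, (0 : Ω → ℝ) ω ∂μ := integral_congr_ae h2
      _ = 0 := by simp
  -- second moments
  have hM2 : ∀ i, ∫ ω, M i ω ^ 2 ∂μ ≤ C * τ ^ (2 - b) := by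
    intro i
    have hgXint : Integrable (fun ω => g i ω * X i ω) μ := by
      refine hbd _ (K * τ) ((hgm i).mul (hXm i)) ?_
      filter_upwards [hgb i] with ω h1
      rw [abs_mul]
      exact mul_le_mul h1 (hXb i ω) (abs_nonneg _) hK0
    have hX2int : Integrable (fun ω => X i ω ^ 2) μ := by
      refine hbd _ (τ ^ 2) ((hXm i).pow 2) ?_
      refine Filter.Eventually.of_forall fun ω => ?_
      rw [abs_pow]
      exact pow_le_pow_left₀ (abs_nonneg _) (hXb i ω) 2
    have hg2int : Integrable (fun ω => g i ω ^ 2) μ := by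
      refine hbd _ (K ^ 2) ((hgm i).pow 2) ?_
      filter_upwards [hgb i] with ω h1
      rw [abs_pow]
      exact pow_le_pow_left₀ (abs_nonneg _) h1 2
    -- pull-out: ∫ g X = ∫ g²
    have h1 : μ[g i * X i | ℱ i] =ᵐ[μ] g i * μ[X i | ℱ i] :=
      condExp_mul_of_stronglyMeasurable_left (hgsm i) hgXint (hXint i)
    have h2 : ∫ ω, g i ω * X i ω ∂μ = ∫ ω, g i ω ^ 2 ∂μ := by
      calc ∫ ω, g i ω * X i ω ∂μ = ∫ ω, (μ[g i * X i | ℱ i]) ω ∂μ :=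
            (integral_condExp (ℱ.le i)).symm
        _ = ∫ ω, g i ω ^ 2 ∂μ := by
            refine integral_congr_ae ?_
            filter_upwards [h1] with ω hω
            rw [hω, Pi.mul_apply, hgdef, sq]
    have hexp : ∫ ω, M i ω ^ 2 ∂μ = ∫ ω, X i ω ^ 2 ∂μ - ∫ ω, g i ω ^ 2 ∂μ := by
      have heq : ∀ ω, M i ω ^ 2 =
          X i ω ^ 2 - 2 * (g i ω * X i ω) + g i ω ^ 2 := by
        intro ω; simp only [hMdef, Pi.sub_apply]; ring
      calc ∫ ω, M i ω ^ 2 ∂μ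
          = ∫ ω, (X i ω ^ 2 - 2 * (g i ω * X i ω) + g i ω ^ 2) ∂μ :=
            integral_congr_ae (Filter.Eventually.of_forall heq)
        _ = (∫ ω, (X i ω ^ 2 - 2 * (g i ω * X i ω)) ∂μ) + ∫ ω, g i ω ^ 2 ∂μ :=
            integral_add (hX2int.sub (hgXint.const_mul 2)) hg2int
        _ = (∫ ω, X i ω ^ 2 ∂μ) - ∫ ω, 2 * (g i ω * X i ω) ∂μ + ∫ ω, g i ω ^ 2 ∂μ := by
            rw [integral_sub hX2int (hgXint.const_mul 2)]
        _ = ∫ ω, X i ω ^ 2 ∂μ - ∫ ω, g i ω ^ 2 ∂μ := by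
            rw [integral_const_mul, h2]; ring
    have hX2 : ∫ ω, X i ω ^ 2 ∂μ ≤ C * τ ^ (2 - b) := by
      have h3 : ∫ ω, X i ω ^ 2 ∂μ ≤ ∫ ω, |D i ω| ^ b * τ ^ (2 - b) ∂μ :=
        integral_mono hX2int ((hintb i).mul_const _)
          (fun ω => sq_truncFun_le hb1.le hb2 hτ)
      have h4 : ∫ ω, |D i ω| ^ b ∂μ ≤ C := by
        calc ∫ ω, |D i ω| ^ b ∂μ
            = ∫ ω, (μ[fun ω' => |D i ω'| ^ b | ℱ i]) ω ∂μ := (integral_condExp (ℱ.le i)).symm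
          _ ≤ ∫ _ω, C ∂μ := integral_mono_ae integrable_condExp (integrable_const C) (hcond i)
          _ = C := by simp
      calc ∫ ω, X i ω ^ 2 ∂μ ≤ ∫ ω, |D i ω| ^ b * τ ^ (2 - b) ∂μ := h3
        _ = (∫ ω, |D i ω| ^ b ∂μ) * τ ^ (2 - b) := integral_mul_const _ _
        _ ≤ C * τ ^ (2 - b) :=
            mul_le_mul_of_nonneg_right h4 (Real.rpow_nonneg hτ.le _)
    have hg2nn : 0 ≤ ∫ ω, g i ω ^ 2 ∂μ := integral_nonneg fun ω => sq_nonneg _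
    rw [hexp]
    linarith
  -- sums
  set A : Ω → ℝ := fun ω => ∑ i ∈ Finset.range n, M i ω with hAdef
  set B : Ω → ℝ := fun ω => ∑ i ∈ Finset.range n, g i ω with hBdef
  have hAm : AEStronglyMeasurable A μ :=
    Finset.aestronglyMeasurable_fun_sum _ fun i _ => hMm i
  have hBm : AEStronglyMeasurable B μ :=
    Finset.aestronglyMeasurable_fun_sum _ fun i _ => hgm i
  have hAb : ∀ᵐ ω ∂μ, |A ω| ≤ n * (τ + K) := by
    filter_upwards [MeasureTheory.ae_all_iff.mpr hMb] with ω hω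
    calc |A ω| ≤ ∑ i ∈ Finset.range n, |M i ω| := Finset.abs_sum_le_sum_abs _ _
      _ ≤ ∑ _i ∈ Finset.range n, (τ + K) := Finset.sum_le_sum fun i _ => hω i
      _ = n * (τ + K) := by rw [Finset.sum_const, Finset.card_range, nsmul_eq_mul]
  have hBb : ∀ᵐ ω ∂μ, |B ω| ≤ n * K := by
    filter_upwards [MeasureTheory.ae_all_iff.mpr hgb] with ω hω
    calc |B ω| ≤ ∑ i ∈ Finset.range n, |g i ω| := Finset.abs_sum_le_sum_abs _ _
      _ ≤ ∑ _i ∈ Finset.range n, K := Finset.sum_le_sum fun i _ => hω i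
      _ = n * K := by rw [Finset.sum_const, Finset.card_range, nsmul_eq_mul]
  have hA2int : Integrable (fun ω => A ω ^ 2) μ := by
    refine hbd _ ((n * (τ + K)) ^ 2) (hAm.pow 2) ?_
    filter_upwards [hAb] with ω h1
    rw [abs_pow]
    exact pow_le_pow_left₀ (abs_nonneg _) h1 2
  have hB2int : Integrable (fun ω => B ω ^ 2) μ := by
    refine hbd _ ((n * K) ^ 2) (hBm.pow 2) ?_
    filter_upwards [hBb] with ω h1
    rw [abs_pow]
    exact pow_le_pow_left₀ (abs_nonneg _) h1 2
  have hABint : Integrable (fun ω => A ω * B ω) μ := by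
    refine hbd _ ((n * (τ + K)) * (n * K)) (hAm.mul hBm) ?_
    filter_upwards [hAb, hBb] with ω h1 h2
    rw [abs_mul]
    exact mul_le_mul h1 h2 (abs_nonneg _) (by positivity)
  -- second moment of A
  have hA2 : ∫ ω, A ω ^ 2 ∂μ ≤ n * (C * τ ^ (2 - b)) := by
    have hexpand : ∫ ω, A ω ^ 2 ∂μ =
        ∑ i ∈ Finset.range n, ∑ j ∈ Finset.range n, ∫ ω, M i ω * M j ω ∂μ := by
      have h1 : (fun ω => A ω ^ 2) =
          fun ω => ∑ i ∈ Finset.range n, ∑ j ∈ Finset.range n, M i ω * M j ω := by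
        funext ω
        rw [hAdef, sq, Finset.sum_mul_sum]
      rw [h1, integral_finset_sum _ fun i _ =>
        integrable_finset_sum _ fun j _ => hprod i j]
      exact Finset.sum_congr rfl fun i _ =>
        integral_finset_sum _ fun j _ => hprod i j
    have hdiag : ∀ i ∈ Finset.range n,
        ∑ j ∈ Finset.range n, ∫ ω, M i ω * M j ω ∂μ = ∫ ω, M i ω ^ 2 ∂μ := by
      intro i hi
      rw [Finset.sum_eq_single_of_mem i hi]
      · exact integral_congr_ae (Filter.Eventually.of_forall fun ω => (sq (M i ω)).symm)
      · intro j _ hji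
        rcases lt_or_gt_of_ne hji with h | h
        · rw [show (fun ω => M i ω * M j ω) = fun ω => M j ω * M i ω from
            funext fun ω => mul_comm _ _]
          exact horth j i h
        · exact horth i j h
    rw [hexpand, Finset.sum_congr rfl hdiag]
    calc ∑ i ∈ Finset.range n, ∫ ω, M i ω ^ 2 ∂μ
        ≤ ∑ _i ∈ Finset.range n, C * τ ^ (2 - b) := Finset.sum_le_sum fun i _ => hM2 i
      _ = n * (C * τ ^ (2 - b)) := by rw [Finset.sum_const, Finset.card_range, nsmul_eq_mul]
  have hB2 : ∫ ω, B ω ^ 2 ∂μ ≤ (n * K) ^ 2 := by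
    have : ∀ᵐ ω ∂μ, B ω ^ 2 ≤ (n * K) ^ 2 := by
      filter_upwards [hBb] with ω h1
      rw [abs_le] at h1
      exact sq_le_sq' (by linarith) h1.2
    calc ∫ ω, B ω ^ 2 ∂μ ≤ ∫ _ω, (n * K) ^ 2 ∂μ :=
          integral_mono_ae hB2int (integrable_const _) this
      _ = (n * K) ^ 2 := by simp
  -- Cauchy–Schwarz
  have hCS : ∫ ω, A ω * B ω ∂μ ≤
      Real.sqrt (∫ ω, A ω ^ 2 ∂μ) * Real.sqrt (∫ ω, B ω ^ 2 ∂μ) := by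
    have hpq : (2 : ℝ).HolderConjugate 2 := Real.HolderConjugate.two_two
    have hAmem : MemLp (fun ω => |A ω|) (ENNReal.ofReal 2) μ :=
      MemLp.of_bound hAm.norm _ (hAb.mono fun ω h => by rwa [Real.norm_eq_abs, abs_abs])
    have hBmem : MemLp (fun ω => |B ω|) (ENNReal.ofReal 2) μ :=
      MemLp.of_bound hBm.norm _ (hBb.mono fun ω h => by rwa [Real.norm_eq_abs, abs_abs])
    have h := integral_mul_le_Lp_mul_Lq_of_nonneg hpq
      (Filter.Eventually.of_forall fun ω => abs_nonneg (A ω))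
      (Filter.Eventually.of_forall fun ω => abs_nonneg (B ω)) hAmem hBmem
    have heA : ∫ ω, |A ω| ^ (2 : ℝ) ∂μ = ∫ ω, A ω ^ 2 ∂μ :=
      integral_congr_ae (Filter.Eventually.of_forall fun ω => by
        show |A ω| ^ (2:ℝ) = A ω ^ 2
        rw [show (2:ℝ) = ((2:ℕ):ℝ) by norm_num, Real.rpow_natCast, sq_abs])
    have heB : ∫ ω, |B ω| ^ (2 : ℝ) ∂μ = ∫ ω, B ω ^ 2 ∂μ :=
      integral_congr_ae (Filter.Eventually.of_forall fun ω => by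
        show |B ω| ^ (2:ℝ) = B ω ^ 2
        rw [show (2:ℝ) = ((2:ℕ):ℝ) by norm_num, Real.rpow_natCast, sq_abs])
    rw [heA, heB] at h
    calc ∫ ω, A ω * B ω ∂μ ≤ ∫ ω, |A ω| * |B ω| ∂μ :=
          integral_mono hABint (hABint.abs.congr
            (Filter.Eventually.of_forall fun ω => abs_mul (A ω) (B ω)))
            fun ω => (le_abs_self _).trans_eq (abs_mul _ _)
      _ ≤ (∫ ω, A ω ^ 2 ∂μ) ^ (1 / (2:ℝ)) * (∫ ω, B ω ^ 2 ∂μ) ^ (1 / (2:ℝ)) := h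
      _ = Real.sqrt (∫ ω, A ω ^ 2 ∂μ) * Real.sqrt (∫ ω, B ω ^ 2 ∂μ) := by
          rw [Real.sqrt_eq_rpow, Real.sqrt_eq_rpow]
  -- put the pieces together
  have hb0 : b ≠ 0 := by linarith
  have hne : (n : ℝ) ≠ 0 := ne_of_gt hn0
  have hsumeq : ∀ ω, ∑ i ∈ Finset.range n, truncFun τ (D i ω) = A ω + B ω := by
    intro ω
    rw [hAdef, hBdef, ← Finset.sum_add_distrib]
    refine Finset.sum_congr rfl fun i _ => ?_
    simp only [hMdef, Pi.sub_apply, sub_add_cancel]; rfl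
  set a : ℝ := Real.sqrt (∫ ω, A ω ^ 2 ∂μ) with hadef
  set bB : ℝ := Real.sqrt (∫ ω, B ω ^ 2 ∂μ) with hbBdef
  have ha0 : 0 ≤ a := Real.sqrt_nonneg _
  have hbB0 : 0 ≤ bB := Real.sqrt_nonneg _
  have hIA : ∫ ω, A ω ^ 2 ∂μ = a ^ 2 :=
    (Real.sq_sqrt (integral_nonneg fun ω => sq_nonneg _)).symm
  have hIB : ∫ ω, B ω ^ 2 ∂μ = bB ^ 2 :=
    (Real.sq_sqrt (integral_nonneg fun ω => sq_nonneg _)).symm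
  have hABexp : ∫ ω, (A ω + B ω) ^ 2 ∂μ ≤ (a + bB) ^ 2 := by
    have heq : ∫ ω, (A ω + B ω) ^ 2 ∂μ =
        (∫ ω, A ω ^ 2 ∂μ) + 2 * ∫ ω, A ω * B ω ∂μ + ∫ ω, B ω ^ 2 ∂μ := by
      calc ∫ ω, (A ω + B ω) ^ 2 ∂μ
          = ∫ ω, (A ω ^ 2 + 2 * (A ω * B ω) + B ω ^ 2) ∂μ :=
            integral_congr_ae (Filter.Eventually.of_forall fun ω => by ring)
        _ = (∫ ω, (A ω ^ 2 + 2 * (A ω * B ω)) ∂μ) + ∫ ω, B ω ^ 2 ∂μ :=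
            integral_add (hA2int.add (hABint.const_mul 2)) hB2int
        _ = (∫ ω, A ω ^ 2 ∂μ) + ∫ ω, 2 * (A ω * B ω) ∂μ + ∫ ω, B ω ^ 2 ∂μ := by
            rw [integral_add hA2int (hABint.const_mul 2)]
        _ = (∫ ω, A ω ^ 2 ∂μ) + 2 * ∫ ω, A ω * B ω ∂μ + ∫ ω, B ω ^ 2 ∂μ := by
            rw [integral_const_mul]
    rw [heq, hIA, hIB]
    have := hCS
    nlinarith [this, ha0, hbB0]
  have hL : ∫ ω, ((1 / (n : ℝ)) * ∑ i ∈ Finset.range n, truncFun τ (D i ω)) ^ 2 ∂μ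
      = (1 / (n : ℝ)) ^ 2 * ∫ ω, (A ω + B ω) ^ 2 ∂μ := by
    rw [← integral_const_mul]
    refine integral_congr_ae (Filter.Eventually.of_forall fun ω => ?_)
    show (1 / (n : ℝ) * ∑ i ∈ Finset.range n, truncFun τ (D i ω)) ^ 2
        = (1 / (n : ℝ)) ^ 2 * (A ω + B ω) ^ 2
    rw [hsumeq ω, mul_pow]
  rw [hL, ← Real.sqrt_eq_rpow]
  have hnn : 0 ≤ ∫ ω, (A ω + B ω) ^ 2 ∂μ := integral_nonneg fun ω => sq_nonneg _
  rw [Real.sqrt_mul (by positivity) _, Real.sqrt_sq (by positivity)]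
  have hstep1 : Real.sqrt (∫ ω, (A ω + B ω) ^ 2 ∂μ) ≤ a + bB := by
    calc Real.sqrt (∫ ω, (A ω + B ω) ^ 2 ∂μ) ≤ Real.sqrt ((a + bB) ^ 2) :=
          Real.sqrt_le_sqrt hABexp
      _ = a + bB := Real.sqrt_sq (by positivity)
  have hstep2 : a ≤ Real.sqrt ((n : ℝ) * (C * τ ^ (2 - b))) := Real.sqrt_le_sqrt hA2
  have hstep3 : bB ≤ (n : ℝ) * K := by
    calc bB ≤ Real.sqrt (((n : ℝ) * K) ^ 2) := Real.sqrt_le_sqrt hB2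
      _ = (n : ℝ) * K := Real.sqrt_sq (by positivity)
  have hchain : (1 / (n : ℝ)) * Real.sqrt (∫ ω, (A ω + B ω) ^ 2 ∂μ)
      ≤ (1 / (n : ℝ)) * (Real.sqrt ((n : ℝ) * (C * τ ^ (2 - b))) + (n : ℝ) * K) := by
    refine mul_le_mul_of_nonneg_left ?_ (by positivity)
    exact hstep1.trans (add_le_add hstep2 hstep3)
  refine hchain.trans (le_of_eq ?_)
  -- final arithmetic
  have hsqrpow : ∀ x y : ℝ, 0 ≤ x → Real.sqrt (x ^ y) = x ^ (y / 2) := by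
    intro x y hx
    rw [Real.sqrt_eq_rpow, ← Real.rpow_mul hx, show y * (1 / 2) = y / 2 by ring]
  have eτ2 : τ ^ ((2 - b) / 2) = c ^ ((2 - b) / 2) * (n : ℝ) ^ ((2 - b) / (2 * b)) := by
    rw [hτdef, Real.mul_rpow hc.le (Real.rpow_nonneg hn0.le _), ← Real.rpow_mul hn0.le,
      show 1 / b * ((2 - b) / 2) = (2 - b) / (2 * b) by ring]
  have eτ1 : τ ^ (1 - b) = c ^ (1 - b) * (n : ℝ) ^ ((1 - b) / b) := by
    rw [hτdef, Real.mul_rpow hc.le (Real.rpow_nonneg hn0.le _), ← Real.rpow_mul hn0.le,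
      show 1 / b * (1 - b) = (1 - b) / b by ring]
  have hc1 : (1 / (n : ℝ)) * ((n : ℝ) ^ ((1 : ℝ) / 2) * (n : ℝ) ^ ((2 - b) / (2 * b)))
      = (n : ℝ) ^ ((1 - b) / b) := by
    rw [← Real.rpow_add hn0, one_div, ← Real.rpow_neg_one (n : ℝ), ← Real.rpow_add hn0]
    congr 1
    exact exp_arith_aux hb0
  have esn : Real.sqrt ((n : ℝ) * (C * τ ^ (2 - b)))
      = (n : ℝ) ^ ((1 : ℝ) / 2) *
        (Real.sqrt C * (c ^ ((2 - b) / 2) * (n : ℝ) ^ ((2 - b) / (2 * b)))) := by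
    rw [Real.sqrt_mul hn0.le, Real.sqrt_mul hC, hsqrpow τ (2 - b) hτ.le, eτ2,
      Real.sqrt_eq_rpow]
  rw [esn, hKdefK, eτ1]
  calc (1 / (n : ℝ)) *
        ((n : ℝ) ^ ((1 : ℝ) / 2) *
          (Real.sqrt C * (c ^ ((2 - b) / 2) * (n : ℝ) ^ ((2 - b) / (2 * b)))) +
          (n : ℝ) * (C * (c ^ (1 - b) * (n : ℝ) ^ ((1 - b) / b))))
      = Real.sqrt C * c ^ ((2 - b) / 2) *
          ((1 / (n : ℝ)) * ((n : ℝ) ^ ((1 : ℝ) / 2) * (n : ℝ) ^ ((2 - b) / (2 * b)))) +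
        C * c ^ (1 - b) * ((1 / (n : ℝ) * (n : ℝ)) * (n : ℝ) ^ ((1 - b) / b)) := by ring
    _ = (Real.sqrt C * c ^ ((2 - b) / 2) + C * c ^ (1 - b)) * (n : ℝ) ^ ((1 - b) / b) := by
        rw [hc1, one_div_mul_cancel hne, one_mul]
        ring
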